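/- The numbers d_{r,n}^B of type B r-derangements on [n+r] satisfy the recurrence d_{r,n}^B = d_{r-1,n}^B + 2n * d_{r,n-1}^B + 2n * d_{r-1,n-1}^B for n, r ≥ 1, with initial conditions d_{r,0}^B = 1 and d_{0,n}^B = n! * ∑_{k=0}^{n} (-1)^k * 2^{n-k} / k!. -/

import Mathlib

open Finset

/-- `d_{r,n}^B`, via the explicit formula
`2^n ∑_i C(r,i) n^(falling i) 2^i ∑_k C(n-i,k) (-1)^k (i+1)^(rising n-i-k) 2^{-k}`. -/
def dB (r n : ℕ) : ℚ :=
  2 ^ n * ∑ i ∈ Finset.range (r + 1),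
    (r.choose i : ℚ) * (n.descFactorial i) * 2 ^ i *
      ∑ k ∈ Finset.range (n - i + 1),
        ((n - i).choose k : ℚ) * (-1) ^ k * ((i + 1).ascFactorial (n - i - k)) / 2 ^ k

def g (i m : ℕ) : ℚ :=
  ∑ j ∈ Finset.range (m + 1),
    (m.choose j : ℚ) * (-1) ^ (m - j) * 2 ^ j * ((i + 1).ascFactorial j)

lemma g_zero (i : ℕ) : g i 0 = 1 := by simp [g]

lemma g_rec (i m : ℕ) : g (i + 1) m = g i m + 2 * m * g (i + 1) (m - 1) := by
  cases m with
  | zero => simp [g]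
  | succ u =>
    have key : g (i + 1) (u + 1) - g i (u + 1) = 2 * (u + 1) * g (i + 1) u := by
      rw [g, g, g, ← Finset.sum_sub_distrib, Finset.sum_range_succ', Finset.mul_sum]
      have h0 : ((u + 1).choose 0 : ℚ) * (-1) ^ (u + 1 - 0) * 2 ^ 0 * ((i + 1 + 1).ascFactorial 0)
          - ((u + 1).choose 0 : ℚ) * (-1) ^ (u + 1 - 0) * 2 ^ 0 * ((i + 1).ascFactorial 0) = 0 := by
        simp
      rw [h0, add_zero]
      refine Finset.sum_congr rfl fun j hj => ?_
      have hj' : j ≤ u := Nat.lt_succ_iff.mp (Finset.mem_range.mp hj)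
      have hsub : u + 1 - (j + 1) = u - j := by omega
      have hc : ((u + 1).choose (j + 1) : ℚ) * (j + 1) = (u + 1) * (u.choose j) := by
        exact_mod_cast (Nat.add_one_mul_choose_eq u j).symm
      have ha1 : ((i + 1 + 1).ascFactorial (j + 1) : ℚ) =
          (i + 1 + 1 + j) * ((i + 1 + 1).ascFactorial j) := by
        rw [Nat.ascFactorial_succ]; push_cast; ring
      have ha2 : ((i + 1).ascFactorial (j + 1) : ℚ) = (i + 1) * ((i + 1 + 1).ascFactorial j) := by
        have := Nat.succ_ascFactorial (i + 1) j
        have h2 := Nat.ascFactorial_succ (n := i + 1) (k := j)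
        rw [h2, ← this]
        push_cast
        ring
      rw [hsub, ha1, ha2]
      linear_combination ((-1 : ℚ)) ^ (u - j) * 2 ^ (j + 1) * ((i + 1 + 1).ascFactorial j) * hc
    have : (u + 1 : ℕ) - 1 = u := rfl
    rw [this]
    push_cast
    linarith [key]

lemma inner_g (i m : ℕ) :
    2 ^ m * ∑ k ∈ Finset.range (m + 1),
      ((m).choose k : ℚ) * (-1) ^ k * ((i + 1).ascFactorial (m - k)) / 2 ^ k = g i m := by
  rw [g, ← Finset.sum_range_reflect, Finset.mul_sum]
  refine Finset.sum_congr rfl fun k hk => ?_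
  have hk' : k ≤ m := Nat.lt_succ_iff.mp (Finset.mem_range.mp hk)
  have h1 : m + 1 - 1 - k = m - k := by omega
  have h2 : m.choose (m - k) = m.choose k := Nat.choose_symm hk'
  have h3 : m - (m - k) = k := by omega
  have h4 : (2 : ℚ) ^ m = 2 ^ (m - k) * 2 ^ k := by
    rw [← pow_add]; congr 1; omega
  rw [h1, h2, h3, h4]
  field_simp

lemma dB_eq (r n : ℕ) : dB r n = ∑ i ∈ Finset.range (r + 1),
    (r.choose i : ℚ) * (n.descFactorial i) * 4 ^ i * g i (n - i) := by
  rw [dB, Finset.mul_sum]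
  refine Finset.sum_congr rfl fun i _ => ?_
  by_cases h : i ≤ n
  · rw [← inner_g i (n - i)]
    have h4 : (2 : ℚ) ^ n = 2 ^ i * 2 ^ (n - i) := by
      rw [← pow_add]; congr 1; omega
    rw [h4]
    have : ((4 : ℚ)) ^ i = 2 ^ i * 2 ^ i := by
      rw [← mul_pow]; norm_num
    rw [this]
    ring
  · have hd : n.descFactorial i = 0 := Nat.descFactorial_eq_zero_iff_lt.mpr (by omega)
    rw [hd]
    push_cast
    ring

lemma dB_split (s n : ℕ) : dB (s + 1) n = dB s n +
    ∑ i ∈ Finset.range (s + 1),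
      (s.choose i : ℚ) * (n.descFactorial (i + 1)) * 4 ^ (i + 1) * g (i + 1) (n - (i + 1)) := by
  rw [dB_eq, dB_eq, Finset.sum_range_succ', add_comm]
  have h0 : ((s + 1).choose 0 : ℚ) * (n.descFactorial 0) * 4 ^ 0 * g 0 (n - 0) =
      (s.choose 0 : ℚ) * (n.descFactorial 0) * 4 ^ 0 * g 0 (n - 0) := by simp
  rw [h0]
  have hsplit : ∀ i ∈ Finset.range (s + 1),
      ((s + 1).choose (i + 1) : ℚ) * (n.descFactorial (i + 1)) * 4 ^ (i + 1) * g (i + 1) (n - (i + 1)) =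
      (s.choose (i + 1) : ℚ) * (n.descFactorial (i + 1)) * 4 ^ (i + 1) * g (i + 1) (n - (i + 1)) +
      (s.choose i : ℚ) * (n.descFactorial (i + 1)) * 4 ^ (i + 1) * g (i + 1) (n - (i + 1)) := by
    intro i _
    rw [Nat.choose_succ_succ]
    push_cast
    ring
  rw [Finset.sum_congr rfl hsplit, Finset.sum_add_distrib]
  have hback : (∑ i ∈ Finset.range (s + 1),
      (s.choose (i + 1) : ℚ) * (n.descFactorial (i + 1)) * 4 ^ (i + 1) * g (i + 1) (n - (i + 1)))
      + (s.choose 0 : ℚ) * (n.descFactorial 0) * 4 ^ 0 * g 0 (n - 0)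
      = ∑ i ∈ Finset.range (s + 1), (s.choose i : ℚ) * (n.descFactorial i) * 4 ^ i * g i (n - i) := by
    rw [← Finset.sum_range_succ' (fun i => (s.choose i : ℚ) * (n.descFactorial i) * 4 ^ i * g i (n - i)) (s + 1),
      Finset.sum_range_succ]
    simp [Nat.choose_succ_self]
  linarith [hback]

/-- The recurrence `d_{r,n}^B = d_{r-1,n}^B + 2n d_{r,n-1}^B + 2n d_{r-1,n-1}^B`
together with the initial conditions. -/
theorem dB_recurrence :
    (∀ r : ℕ, dB r 0 = 1) ∧
      (∀ n : ℕ, dB 0 n =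
        (n.factorial : ℚ) *
          ∑ k ∈ Finset.range (n + 1), (-1 : ℚ) ^ k * 2 ^ (n - k) / (k.factorial : ℚ)) ∧
      ∀ r n : ℕ, 1 ≤ r → 1 ≤ n →
        dB r n = dB (r - 1) n + 2 * n * dB r (n - 1) + 2 * n * dB (r - 1) (n - 1) := by
  refine ⟨?_, ?_, ?_⟩
  · intro r
    rw [dB_eq, Finset.sum_eq_single 0]
    · simp [g_zero]
    · intro i _ hi
      obtain ⟨j, rfl⟩ : ∃ j, i = j + 1 := ⟨i - 1, by omega⟩
      simp [Nat.zero_descFactorial_succ]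
    · intro h
      exact absurd (Finset.mem_range.mpr (by omega)) h
  · intro n
    rw [dB]
    simp only [zero_add, Finset.sum_range_one, Nat.choose_self, Nat.descFactorial_zero, Nat.sub_zero,
      Nat.cast_one, pow_zero, one_mul, mul_one]
    rw [Finset.mul_sum, Finset.mul_sum]
    refine Finset.sum_congr rfl fun k hk => ?_
    have hk' : k ≤ n := Nat.lt_succ_iff.mp (Finset.mem_range.mp hk)
    have hf : (n.choose k : ℚ) * (k.factorial) * ((n - k).factorial) = n.factorial := by
      exact_mod_cast Nat.choose_mul_factorial_mul_factorial hk'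
    have h2 : (2 : ℚ) ^ n = 2 ^ k * 2 ^ (n - k) := by
      rw [← pow_add]; congr 1; omega
    rw [Nat.one_ascFactorial, h2]
    have hkf : (k.factorial : ℚ) ≠ 0 := by exact_mod_cast k.factorial_ne_zero
    have h2k : (2 : ℚ) ^ k ≠ 0 := by positivity
    field_simp
    linear_combination hf
  · intro r n hr hn
    obtain ⟨s, rfl⟩ : ∃ s, r = s + 1 := ⟨r - 1, by omega⟩
    obtain ⟨t, rfl⟩ : ∃ t, n = t + 1 := ⟨n - 1, by omega⟩
    simp only [Nat.add_sub_cancel]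
    rw [dB_split s (t + 1), dB_split s t, dB_eq s t]
    have key : ∀ i ∈ Finset.range (s + 1),
        (s.choose i : ℚ) * ((t + 1).descFactorial (i + 1)) * 4 ^ (i + 1) *
          g (i + 1) (t + 1 - (i + 1)) =
        2 * (t + 1) * ((s.choose i : ℚ) * (t.descFactorial (i + 1)) * 4 ^ (i + 1) *
          g (i + 1) (t - (i + 1))) +
        2 * (t + 1) * 2 * ((s.choose i : ℚ) * (t.descFactorial i) * 4 ^ i * g i (t - i)) := by
      intro i _
      have hd1 : ((t + 1).descFactorial (i + 1) : ℚ) = (t + 1) * (t.descFactorial i) := by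
        rw [Nat.succ_descFactorial_succ]; push_cast; ring
      have hd2 : (t.descFactorial (i + 1) : ℚ) = ((t - i : ℕ) : ℚ) * (t.descFactorial i) := by
        rw [Nat.descFactorial_succ]; push_cast; ring
      have hs1 : t + 1 - (i + 1) = t - i := by omega
      have hs2 : t - (i + 1) = t - i - 1 := by omega
      rw [hd1, hd2, hs1, hs2, g_rec i (t - i)]
      ring
    rw [Finset.sum_congr rfl key, Finset.sum_add_distrib, ← Finset.mul_sum, ← Finset.mul_sum]
    push_cast
    ring
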